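/- For every continuous function f on a compact interval [a,b] with a < b and every ε > 0, there exist a natural number n and vectors α, β, w ∈ ℝⁿ such that sup_{x ∈ [a,b]} |Σ_{i=1}^n wᵢ σ(αᵢ x + βᵢ) − f(x)| < ε. -/

import Mathlib

/-- Logistic sigmoid function. -/
noncomputable def sigmoid (z : ℝ) : ℝ := 1 / (1 + Real.exp (-z))

lemma sigmoid_nonneg (z : ℝ) : 0 ≤ sigmoid z := by
  unfold sigmoid; positivity

lemma sigmoid_le_one (z : ℝ) : sigmoid z ≤ 1 := by
  unfold sigmoid
  rw [div_le_one (by positivity)]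
  nlinarith [Real.exp_pos (-z)]

lemma sigmoid_le_exp (z : ℝ) : sigmoid z ≤ Real.exp z := by
  unfold sigmoid
  rw [div_le_iff₀ (by positivity)]
  have h1 : Real.exp z * Real.exp (-z) = 1 := by
    rw [← Real.exp_add]; simp
  nlinarith [Real.exp_pos z]

lemma one_sub_sigmoid_le_exp (z : ℝ) : 1 - sigmoid z ≤ Real.exp (-z) := by
  unfold sigmoid
  have h : (0:ℝ) < 1 + Real.exp (-z) := by positivity
  have key : 1 - 1 / (1 + Real.exp (-z)) = Real.exp (-z) / (1 + Real.exp (-z)) := by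
    field_simp
    ring
  rw [key]
  exact div_le_self (Real.exp_pos _).le (by nlinarith [Real.exp_pos (-z)])

lemma sigmoid_zero : sigmoid 0 = 1 / 2 := by
  unfold sigmoid; norm_num

set_option maxHeartbeats 1000000 in
/-- Uniform universal approximation: for every continuous function `f` on `[a,b]` and
every `ε > 0`, there is a single-hidden-layer sigmoid network uniformly within `ε` of `f`. -/
theorem elm_universal_approx_uniform (a b : ℝ) (hab : a < b) (f : ℝ → ℝ)
    (hf : ContinuousOn f (Set.Icc a b)) (ε : ℝ) (hε : 0 < ε) :
    ∃ (n : ℕ) (α β w : Fin n → ℝ),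
      ∀ x ∈ Set.Icc a b, |(∑ i, w i * sigmoid (α i * x + β i)) - f x| < ε := by
  have hUC : UniformContinuousOn f (Set.Icc a b) :=
    isCompact_Icc.uniformContinuousOn_of_continuous hf
  set ε' := ε / 4 with hε'def
  have hε' : 0 < ε' := by positivity
  obtain ⟨δ, hδ, hmod⟩ := (Metric.uniformContinuousOn_iff).mp hUC ε' hε'
  obtain ⟨N, hN⟩ := exists_nat_gt (max 1 ((b - a) / δ))
  have hN1 : (1:ℝ) ≤ (N:ℝ) := le_of_lt (lt_of_le_of_lt (le_max_left _ _) hN)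
  have hNpos : (0:ℝ) < (N:ℝ) := by linarith
  set h := (b - a) / N with hhdef
  have hh : 0 < h := div_pos (by linarith) hNpos
  have hNh : (N:ℝ) * h = b - a := by
    rw [hhdef]; field_simp
  have hhδ : h < δ := by
    have h1 : (b - a) / δ < N := lt_of_le_of_lt (le_max_right _ _) hN
    rw [div_lt_iff₀ hδ] at h1
    rw [hhdef, div_lt_iff₀ hNpos]
    nlinarith
  set M := Real.log (2 * N) / h with hMdef
  have hM : 0 < M := div_pos (Real.log_pos (by linarith)) hh
  set r := Real.exp (-(M * h)) with hrdef
  have hrval : r = 1 / (2 * N) := by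
    rw [hrdef, hMdef, div_mul_cancel₀ _ (ne_of_gt hh), Real.exp_neg,
      Real.exp_log (by linarith)]
    rw [one_div]
  have hrpos : 0 < r := Real.exp_pos _
  set t : ℕ → ℝ := fun k => a + k * h with htdef
  set s : ℕ → ℝ := fun k => a + ((k:ℝ) - 1/2) * h with hsdef
  have htmem : ∀ k : ℕ, k ≤ N → t k ∈ Set.Icc a b := by
    intro k hk
    have hk' : (k:ℝ) ≤ (N:ℝ) := by exact_mod_cast hk
    constructor
    · simp only [htdef]; nlinarith
    · simp only [htdef]; nlinarith
  refine ⟨N + 1, Fin.cons 0 (fun _ => M), Fin.cons 0 (fun k => -(M * s (k.1 + 1))),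
    Fin.cons (2 * f a) (fun k => f (t (k.1 + 1)) - f (t k.1)), ?_⟩
  intro x hx
  obtain ⟨hxa, hxb⟩ := hx
  rw [Fin.sum_univ_succ]
  simp only [Fin.cons_zero, Fin.cons_succ, Fin.val_succ]
  rw [show (0:ℝ) * x + 0 = 0 by ring, sigmoid_zero]
  rw [Fin.sum_univ_eq_sum_range
    (fun k => (f (t (k + 1)) - f (t k)) * sigmoid (M * x + -(M * s (k + 1)))) N]
  set u := (x - a) / h with hudef
  have hu : u * h = x - a := div_mul_cancel₀ _ (ne_of_gt hh)
  have hu0 : 0 ≤ u := div_nonneg (by linarith) hh.le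
  have huN : u ≤ N := by
    rw [hudef, div_le_iff₀ hh]; nlinarith
  set j := ⌊u + 1/2⌋₊ with hjdef
  have hy0 : (0:ℝ) ≤ u + 1/2 := by linarith
  have hj1 : (j:ℝ) ≤ u + 1/2 := Nat.floor_le hy0
  have hj2 : u + 1/2 < (j:ℝ) + 1 := Nat.lt_floor_add_one _
  have hjN : j ≤ N := by
    have : j < N + 1 := (Nat.floor_lt hy0).mpr (by push_cast; linarith)
    omega
  -- f (t j) is close to f x
  have hfj : |f (t j) - f x| < ε' := by
    have hmem : t j ∈ Set.Icc a b := htmem j hjN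
    have hd : dist (t j) x < δ := by
      rw [Real.dist_eq, abs_lt]
      constructor
      · simp only [htdef]; nlinarith
      · simp only [htdef]; nlinarith
    have := hmod (t j) hmem x ⟨hxa, hxb⟩ hd
    rwa [Real.dist_eq] at this
  -- jump sizes are small
  have hjump : ∀ k : ℕ, k < N → |f (t (k + 1)) - f (t k)| ≤ ε' := by
    intro k hk
    have h1 : t (k+1) ∈ Set.Icc a b := htmem (k+1) (by omega)
    have h2 : t k ∈ Set.Icc a b := htmem k (by omega)
    have hd : dist (t (k+1)) (t k) < δ := by
      rw [Real.dist_eq]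
      have : t (k+1) - t k = h := by simp only [htdef]; push_cast; ring
      rw [this, abs_of_pos hh]; exact hhδ
    have := hmod (t (k+1)) h1 (t k) h2 hd
    rw [Real.dist_eq] at this
    exact this.le
  -- telescoping
  have htel : (∑ k ∈ Finset.range N,
      (f (t (k + 1)) - f (t k)) * (if k + 1 ≤ j then (1:ℝ) else 0))
      = f (t j) - f a := by
    have hsub : Finset.range j ⊆ Finset.range N := Finset.range_subset_range.mpr hjN
    have h0 : ∀ k ∈ Finset.range N, k ∉ Finset.range j →
        (f (t (k + 1)) - f (t k)) * (if k + 1 ≤ j then (1:ℝ) else 0) = 0 := by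
      intro k _ hk
      rw [Finset.mem_range, not_lt] at hk
      rw [if_neg (by omega), mul_zero]
    rw [← Finset.sum_subset hsub h0]
    have : ∀ k ∈ Finset.range j,
        (f (t (k + 1)) - f (t k)) * (if k + 1 ≤ j then (1:ℝ) else 0)
        = f (t (k+1)) - f (t k) := by
      intro k hk
      rw [Finset.mem_range] at hk
      rw [if_pos (by omega), mul_one]
    rw [Finset.sum_congr rfl this, Finset.sum_range_sub (fun k => f (t k)) j]
    simp [htdef]
  -- rearrange
  have hrearr : 2 * f a * (1/2) + (∑ k ∈ Finset.range N,
      (f (t (k + 1)) - f (t k)) * sigmoid (M * x + -(M * s (k + 1)))) - f x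
      = (f (t j) - f x) + ∑ k ∈ Finset.range N,
        (f (t (k + 1)) - f (t k)) *
          (sigmoid (M * x + -(M * s (k + 1))) - (if k + 1 ≤ j then (1:ℝ) else 0)) := by
    have : ∑ k ∈ Finset.range N,
        (f (t (k + 1)) - f (t k)) *
          (sigmoid (M * x + -(M * s (k + 1))) - (if k + 1 ≤ j then (1:ℝ) else 0))
        = (∑ k ∈ Finset.range N,
            (f (t (k + 1)) - f (t k)) * sigmoid (M * x + -(M * s (k + 1))))
          - ∑ k ∈ Finset.range N,
            (f (t (k + 1)) - f (t k)) * (if k + 1 ≤ j then (1:ℝ) else 0) := by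
      rw [← Finset.sum_sub_distrib]
      exact Finset.sum_congr rfl (fun k _ => by ring)
    rw [this, htel]; ring
  rw [hrearr]
  -- per-term bound
  have hterm : ∀ k ∈ Finset.range N,
      |(f (t (k + 1)) - f (t k)) *
        (sigmoid (M * x + -(M * s (k + 1))) - (if k + 1 ≤ j then (1:ℝ) else 0))|
      ≤ ε' * (r + (if k + 1 = j then (1:ℝ) else 0) + (if k = j then (1:ℝ) else 0)) := by
    intro k hk
    rw [Finset.mem_range] at hk
    rw [abs_mul]
    have hz : M * x + -(M * s (k + 1)) = M * ((u - ((k:ℝ) + 1) + 1/2) * h) := by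
      simp only [hsdef]; push_cast; nlinarith [hu]
    have hbound : |sigmoid (M * x + -(M * s (k + 1))) - (if k + 1 ≤ j then (1:ℝ) else 0)|
        ≤ r + (if k + 1 = j then (1:ℝ) else 0) + (if k = j then (1:ℝ) else 0) := by
      by_cases hkj : k + 1 ≤ j
      · rw [if_pos hkj]
        have habs : |sigmoid (M * x + -(M * s (k + 1))) - 1|
            = 1 - sigmoid (M * x + -(M * s (k + 1))) := by
          rw [abs_sub_comm, abs_of_nonneg (by linarith [sigmoid_le_one (M * x + -(M * s (k + 1)))])]
        rw [habs]
        rcases eq_or_lt_of_le hkj with heq | hlt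
        · rw [if_pos heq]
          have := sigmoid_nonneg (M * x + -(M * s (k + 1)))
          have : (if k = j then (0:ℝ) else 0) = 0 := by simp
          split_ifs <;> linarith [sigmoid_nonneg (M * x + -(M * s (k + 1))), hrpos]
        · -- k + 1 < j : far below
          have hkj' : ((k:ℝ) + 1) + 1 ≤ (j:ℝ) := by exact_mod_cast hlt
          have hfar : M * h ≤ M * x + -(M * s (k + 1)) := by
            rw [hz]
            have h1 : (1:ℝ) ≤ u - ((k:ℝ) + 1) + 1/2 := by linarith
            have h2 : h ≤ (u - ((k:ℝ) + 1) + 1/2) * h := by nlinarith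
            exact mul_le_mul_of_nonneg_left h2 hM.le
          have := one_sub_sigmoid_le_exp (M * x + -(M * s (k + 1)))
          have hexp : Real.exp (-(M * x + -(M * s (k + 1)))) ≤ r := by
            rw [hrdef]
            exact Real.exp_le_exp.mpr (by linarith)
          split_ifs <;> linarith
      · rw [if_neg hkj]
        push_neg at hkj
        rw [sub_zero, abs_of_nonneg (sigmoid_nonneg _)]
        rcases eq_or_lt_of_le (Nat.succ_le_of_lt hkj) with heq | hlt
        · -- k + 1 = j + 1, i.e. k = j
          have hkeq : k = j := by omega
          rw [if_pos hkeq]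
          have := sigmoid_le_one (M * x + -(M * s (k + 1)))
          split_ifs <;> linarith [hrpos]
        · -- k ≥ j + 1 : far above
          have hkj' : (j:ℝ) + 1 ≤ (k:ℝ) := by
            have : j + 1 ≤ k := by omega
            exact_mod_cast this
          have hfar : M * x + -(M * s (k + 1)) ≤ -(M * h) := by
            rw [hz]
            have h1 : u - ((k:ℝ) + 1) + 1/2 ≤ -1 := by linarith
            have h2 : (u - ((k:ℝ) + 1) + 1/2) * h ≤ -h := by nlinarith
            have h3 := mul_le_mul_of_nonneg_left h2 hM.le
            rw [mul_neg] at h3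
            exact h3
          have := sigmoid_le_exp (M * x + -(M * s (k + 1)))
          have hexp : Real.exp (M * x + -(M * s (k + 1))) ≤ r := by
            rw [hrdef]
            exact Real.exp_le_exp.mpr hfar
          split_ifs <;> linarith
    exact mul_le_mul (hjump k hk) hbound (abs_nonneg _) hε'.le
  -- sum the bounds
  have hsum1 : (∑ k ∈ Finset.range N,
      |(f (t (k + 1)) - f (t k)) *
        (sigmoid (M * x + -(M * s (k + 1))) - (if k + 1 ≤ j then (1:ℝ) else 0))|)
      ≤ ∑ k ∈ Finset.range N,
        (ε' * (r + (if k + 1 = j then (1:ℝ) else 0) + (if k = j then (1:ℝ) else 0))) :=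
    Finset.sum_le_sum hterm
  have hA1 : (∑ k ∈ Finset.range N, if k + 1 = j then (1:ℝ) else 0) ≤ 1 := by
    have hpt : ∀ k ∈ Finset.range N,
        (if k + 1 = j then (1:ℝ) else 0) ≤ (if k = j - 1 then (1:ℝ) else 0) := by
      intro k _
      split_ifs with hA hB hB
      · exact le_refl _
      · exfalso; omega
      · norm_num
      · exact le_refl _
    calc (∑ k ∈ Finset.range N, if k + 1 = j then (1:ℝ) else 0)
        ≤ ∑ k ∈ Finset.range N, if k = j - 1 then (1:ℝ) else 0 := Finset.sum_le_sum hpt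
      _ ≤ 1 := by
          rw [Finset.sum_ite_eq']
          split_ifs <;> norm_num
  have hA2 : (∑ k ∈ Finset.range N, if k = j then (1:ℝ) else 0) ≤ 1 := by
    rw [Finset.sum_ite_eq']
    split_ifs <;> norm_num
  have hsum2 : (∑ k ∈ Finset.range N,
      (ε' * (r + (if k + 1 = j then (1:ℝ) else 0) + (if k = j then (1:ℝ) else 0))))
      = ε' * ((N:ℝ) * r + (∑ k ∈ Finset.range N, if k + 1 = j then (1:ℝ) else 0)
          + (∑ k ∈ Finset.range N, if k = j then (1:ℝ) else 0)) := by
    rw [← Finset.mul_sum]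
    congr 1
    rw [Finset.sum_add_distrib, Finset.sum_add_distrib, Finset.sum_const,
      Finset.card_range]
    push_cast; ring
  have hsum : (∑ k ∈ Finset.range N,
      |(f (t (k + 1)) - f (t k)) *
        (sigmoid (M * x + -(M * s (k + 1))) - (if k + 1 ≤ j then (1:ℝ) else 0))|)
      ≤ ε' * ((N:ℝ) * r + 1 + 1) := by
    rw [hsum2] at hsum1
    have hfin : ε' * ((N:ℝ) * r + (∑ k ∈ Finset.range N, if k + 1 = j then (1:ℝ) else 0)
          + (∑ k ∈ Finset.range N, if k = j then (1:ℝ) else 0))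
        ≤ ε' * ((N:ℝ) * r + 1 + 1) := by
      apply mul_le_mul_of_nonneg_left _ hε'.le
      linarith
    linarith
  have hNr : (N:ℝ) * r = 1 / 2 := by
    rw [hrval]; field_simp
  have habs1 := abs_add_le (f (t j) - f x)
    (∑ k ∈ Finset.range N,
      (f (t (k + 1)) - f (t k)) *
        (sigmoid (M * x + -(M * s (k + 1))) - (if k + 1 ≤ j then (1:ℝ) else 0)))
  have habs2 := Finset.abs_sum_le_sum_abs
    (fun k => (f (t (k + 1)) - f (t k)) *
      (sigmoid (M * x + -(M * s (k + 1))) - (if k + 1 ≤ j then (1:ℝ) else 0)))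
    (Finset.range N)
  have h5 : ε' * ((N:ℝ) * r + 1 + 1) = ε' * (5/2) := by rw [hNr]; ring
  rw [h5] at hsum
  have hεε : ε' = ε / 4 := hε'def
  linarith
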